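/- arXiv:2409.15081 — 3 statements merged into one kernel-verified Lean document; each statement's English description precedes it below -/
import Mathlib

section
/- Let I be a monomial ideal in K[x_1,…,x_n] over a field K of characteristic 0, with support supp(I) = {m ∈ ℤ_{≥0}^n : x^m ∈ I}. Let α ∈ ℤ^n be such that there is an index k with α_k = −1, α_j ≥ 0 for j ≠ k, α + e_k ∈ ℤ_{≥0}^n \ supp(I), and α + e_k + e_j ∈ supp(I) for every j ∈ {1,…,n}. Then the homogeneous derivation ∂_{α, e_k^*} of K[x_1,…,x_n] sending x^m to m_k·x^{m+α} preserves the ideal I, i.e. ∂_{α,e_k^*}(I) ⊆ I. -/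
open MvPolynomial

/-- Let `I` be a monomial ideal and `α ∈ ℤ^n` an outer degree with `α k = -1`,
`α j ≥ 0` for `j ≠ k`, such that `α + e k ∉ supp I` and `α + e k + e j ∈ supp I`
for all `j`. Then the homogeneous derivation `∂_{α, e_k^*} : x^m ↦ m_k · x^{m+α}`
preserves the ideal `I`. -/
theorem derivation_preserves_ideal (K : Type) [Field K] [CharZero K] (n : ℕ)
    (I : Ideal (MvPolynomial (Fin n) K))
    (hmono : ∃ G : Set (Fin n →₀ ℕ),
      I = Ideal.span ((fun a => monomial a (1 : K)) '' G))
    (hfull : ∀ i : Fin n, X i ∉ I)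
    (α : Fin n → ℤ) (k : Fin n)
    (hk : α k = -1) (hj : ∀ j : Fin n, j ≠ k → 0 ≤ α j)
    (β : Fin n →₀ ℕ) (hβ : (fun i => (β i : ℤ)) = α + Pi.single k 1)
    (hβI : monomial β (1 : K) ∉ I)
    (hsupp : ∀ j : Fin n, ∀ γ : Fin n →₀ ℕ,
      ((fun i => (γ i : ℤ)) = α + Pi.single k 1 + Pi.single j 1) →
      monomial γ (1 : K) ∈ I) :
    ∀ m : Fin n →₀ ℕ, monomial m (1 : K) ∈ I →
      ∀ m' : Fin n →₀ ℕ, ((fun i => (m' i : ℤ)) = (fun i => (m i : ℤ)) + α) →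
        (m k : K) • monomial m' (1 : K) ∈ I := by

  intro m hm m' hm'
  by_cases hk0 : m k = 0
  · rw [hk0]
    simp
  have hβi : ∀ i, (β i : ℤ) = α i + (if i = k then 1 else 0) := by
    intro i
    have := congrFun hβ i
    simp only [Pi.add_apply, Pi.single_apply] at this
    exact this
  have hm'i : ∀ i, (m' i : ℤ) = (m i : ℤ) + α i := by
    intro i
    have := congrFun hm' i
    simpa using this
  obtain ⟨j, hjle⟩ : ∃ j : Fin n, ∀ i,
      (if i = k then 1 else 0) + (if i = j then 1 else 0) ≤ m i := by
    by_cases h2 : 2 ≤ m k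
    · exact ⟨k, fun i => by by_cases h : i = k <;> simp [h] <;> omega⟩
    · by_cases hex : ∃ j, j ≠ k ∧ 1 ≤ m j
      · obtain ⟨j, hjk, hj1⟩ := hex
        refine ⟨j, fun i => ?_⟩
        by_cases h : i = k <;> by_cases h' : i = j <;>
          simp_all <;> omega
      · exfalso
        push_neg at hex
        have hmeq : m = Finsupp.single k 1 := by
          ext i
          rw [Finsupp.single_apply]
          by_cases h : k = i
          · subst h; simp; omega
          · have := hex i (fun hik => h hik.symm)
            simp [h]; omega
        apply hfull k
        have hXk : X k = monomial m (1 : K) := by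
          rw [hmeq]; rfl
        rw [hXk]
        exact hm
  set γ : Fin n →₀ ℕ := β + Finsupp.single j 1 with hγdef
  have hγi : ∀ i, (γ i : ℤ) = (β i : ℤ) + (if j = i then 1 else 0) := by
    intro i
    simp [hγdef, Finsupp.add_apply, Finsupp.single_apply]
  have hγle : γ ≤ m' := by
    rw [Finsupp.le_def]
    intro i
    have h1 := hβi i
    have h2 := hm'i i
    have h3 := hjle i
    have h4 := hγi i
    have : (γ i : ℤ) ≤ (m' i : ℤ) := by
      by_cases hik : i = k <;> by_cases hij : i = j <;>
        simp_all <;> omega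
    exact_mod_cast this
  have hγI : monomial γ (1 : K) ∈ I := by
    apply hsupp j
    funext i
    have h1 := hβi i
    have h4 := hγi i
    simp only [Pi.add_apply, Pi.single_apply]
    by_cases hik : i = k <;> by_cases hij : i = j <;>
      simp_all <;> omega
  have hsum : γ + (m' - γ) = m' := add_tsub_cancel_of_le hγle
  have hm'I : monomial m' (1 : K) ∈ I := by
    rw [← hsum, ← one_mul (1 : K), ← monomial_mul]
    exact I.mul_mem_right _ hγI
  rw [MvPolynomial.smul_eq_C_mul]
  exact I.mul_mem_left _ hm'I
end

section
/- Let I be a monomial ideal in K[x] = K[x_1,…,x_n] (char K = 0) and let α ∈ ℤ_{≥0}^n. For i ∈ {1,…,n}, the derivation of K[x]/I induced by ∂_{α,e_i^*} (sending the class of x^m to m_i times the class of x^{m+α}) is the zero derivation if and only if α + e_i ∈ supp(I). -/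
open MvPolynomial

/-- For a monomial ideal `I` and an inner degree `α ∈ ℤ_{≥0}^n`, the derivation of
`K[x]/I` induced by `∂_{α,e_i^*}` (sending the class of `x^m` to `m_i` times the
class of `x^{m+α}`) is zero if and only if `α + e_i ∈ supp I`. -/
theorem induced_derivation_eq_zero_iff (K : Type) [Field K] [CharZero K] (n : ℕ)
    (I : Ideal (MvPolynomial (Fin n) K))
    (hmono : ∃ G : Set (Fin n →₀ ℕ),
      I = Ideal.span ((fun a => monomial a (1 : K)) '' G))
    (α : Fin n →₀ ℕ) (i : Fin n) :
    (∀ m : Fin n →₀ ℕ, (m i : K) • monomial (m + α) (1 : K) ∈ I) ↔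
      monomial (α + Finsupp.single i 1) (1 : K) ∈ I := by
  constructor
  · intro h
    have := h (Finsupp.single i 1)
    simpa [add_comm] using this
  · intro h m
    by_cases hm : m i = 0
    · simp [hm]
    · have key : m + α = (α + Finsupp.single i 1) + (m - Finsupp.single i 1) := by
        ext j
        by_cases hj : j = i
        · subst hj
          simp [Finsupp.single_apply]
          omega
        · simp [Finsupp.single_apply, hj, Ne.symm hj]
          omega
      have : monomial (m + α) (1 : K) ∈ I := by
        rw [key]
        have : monomial ((α + Finsupp.single i 1) + (m - Finsupp.single i 1)) (1 : K)
            = monomial (α + Finsupp.single i 1) (1 : K)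
              * monomial (m - Finsupp.single i 1) (1 : K) := by
          rw [monomial_mul, one_mul]
        rw [this]
        exact Ideal.mul_mem_right _ _ h
      rw [smul_eq_C_mul]
      exact Ideal.mul_mem_left _ _ this
end

section
/- Let I be a monomial ideal in K[x_1,…,x_n] (char K = 0), α ∈ ℤ_{≥0}^n, and E_α = {i : α + e_i ∉ supp(I)}. Then the derivations of K[x]/I induced by ∂_{α,e_i^*} for i ∈ E_α are linearly independent over K. Consequently, the space of homogeneous derivations of K[x]/I of degree α has dimension exactly #E_α. -/
open MvPolynomial

set_option maxHeartbeats 1000000 in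
set_option synthInstance.maxHeartbeats 400000 in
/-- Let `I` be a monomial ideal, `α ∈ ℤ_{≥0}^n` and
`E_α = {i : α + e_i ∉ supp I}`. The derivations of `A = K[x]/I` induced by
`∂_{α,e_i^*}` for `i ∈ E_α` are linearly independent over `K`; consequently the
space of homogeneous derivations of `A` of degree `α` (spanned by all the induced
`∂_{α,e_i^*}`) has dimension exactly `#E_α`. -/
theorem induced_derivations_linearIndependent (K : Type) [Field K] [CharZero K]
    (n : ℕ) (I : Ideal (MvPolynomial (Fin n) K))
    (hmono : ∃ G : Set (Fin n →₀ ℕ),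
      I = Ideal.span ((fun a => monomial a (1 : K)) '' G))
    (α : Fin n →₀ ℕ)
    (D : Fin n → ((MvPolynomial (Fin n) K ⧸ I) →ₗ[K] (MvPolynomial (Fin n) K ⧸ I)))
    (hD : ∀ (i : Fin n) (m : Fin n →₀ ℕ),
      D i (Ideal.Quotient.mk I (monomial m (1 : K))) =
        (m i : K) • Ideal.Quotient.mk I (monomial (m + α) (1 : K)))
    (Eα : Finset (Fin n))
    (hE : ∀ i : Fin n, i ∈ Eα ↔ monomial (α + Finsupp.single i 1) (1 : K) ∉ I) :
    LinearIndependent K (fun i : Eα => D i) ∧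
      Module.finrank K (Submodule.span K (Set.range D)) = Eα.card := by
  classical
  have hsm : ∀ (a : K) (p : MvPolynomial (Fin n) K),
      Ideal.Quotient.mk I (a • p) = a • Ideal.Quotient.mk I p := fun a p => by
    rw [← Ideal.Quotient.mkₐ_eq_mk K I]; exact map_smul (Ideal.Quotient.mkₐ K I) a p
  -- For i ∉ Eα, the induced derivation vanishes.
  have key : ∀ i : Fin n, i ∉ Eα → D i = 0 := by
    intro i hi
    have hmem : monomial (α + Finsupp.single i 1) (1 : K) ∈ I := by
      by_contra h; exact hi ((hE i).mpr h)
    have hz : ∀ p : MvPolynomial (Fin n) K, D i (Ideal.Quotient.mk I p) = 0 := by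
      intro p
      induction p using MvPolynomial.induction_on' with
      | monomial u a =>
        have hmono1 : (monomial u a : MvPolynomial (Fin n) K) = a • monomial u 1 := by
          rw [smul_monomial, smul_eq_mul, mul_one]
        rw [hmono1, hsm, (D i).map_smul, hD]
        by_cases hu : u i = 0
        · simp [hu]
        · have hle : Finsupp.single i 1 ≤ u :=
            Finsupp.single_le_iff.mpr (Nat.one_le_iff_ne_zero.mpr hu)
          have heq : (u - Finsupp.single i 1) + (α + Finsupp.single i 1) = u + α := by
            rw [add_comm α, ← add_assoc, tsub_add_cancel_of_le hle]
          have hIm : monomial (u + α) (1 : K) ∈ I := by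
            have := I.mul_mem_left (monomial (u - Finsupp.single i 1) (1 : K)) hmem
            rwa [monomial_mul, one_mul, heq] at this
          rw [Ideal.Quotient.eq_zero_iff_mem.mpr hIm]
          simp
      | add p q hp hq =>
        rw [map_add, (D i).map_add, hp, hq, add_zero]
    refine LinearMap.ext fun x => ?_
    obtain ⟨p, rfl⟩ := Ideal.Quotient.mk_surjective x
    rw [hz, LinearMap.zero_apply]
  -- Linear independence.
  have hli : LinearIndependent K (fun i : Eα => D i) := by
    rw [Fintype.linearIndependent_iff]
    intro g hg j
    have hval := congrArg
      (fun f : (MvPolynomial (Fin n) K ⧸ I) →ₗ[K] (MvPolynomial (Fin n) K ⧸ I) =>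
        f (Ideal.Quotient.mk I (monomial (Finsupp.single (j : Fin n) 1) (1 : K)))) hg
    simp only [LinearMap.coe_sum, Finset.sum_apply, LinearMap.smul_apply,
      LinearMap.zero_apply] at hval
    have happ : ∀ i : Eα,
        g i • D (i : Fin n) (Ideal.Quotient.mk I (monomial (Finsupp.single (j : Fin n) 1) (1 : K)))
          = (if i = j then g j else 0) •
            Ideal.Quotient.mk I (monomial (Finsupp.single (j : Fin n) 1 + α) (1 : K)) := by
      intro i
      rw [hD]
      by_cases hij : i = j
      · subst hij; simp [Finsupp.single_apply]
      · have : (j : Fin n) ≠ (i : Fin n) := fun h => hij (Subtype.ext h.symm)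
        simp [Finsupp.single_apply, this, hij]
    rw [Finset.sum_congr rfl (fun i _ => happ i)] at hval
    simp only [ite_smul, zero_smul, Finset.sum_ite_eq', Finset.mem_univ, if_true] at hval
    have hne : Ideal.Quotient.mk I (monomial (Finsupp.single (j : Fin n) 1 + α) (1 : K)) ≠ 0 := by
      rw [Ne, Ideal.Quotient.eq_zero_iff_mem, add_comm]
      exact (hE j).mp j.2
    rcases smul_eq_zero.mp hval with h | h
    · exact h
    · exact absurd h hne
  refine ⟨hli, ?_⟩
  have hspan : Submodule.span K (Set.range D)
      = Submodule.span K (Set.range fun i : Eα => D (i : Fin n)) := by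
    apply le_antisymm
    · rw [Submodule.span_le]
      rintro _ ⟨i, rfl⟩
      by_cases hi : i ∈ Eα
      · exact Submodule.subset_span ⟨⟨i, hi⟩, rfl⟩
      · rw [key i hi]; exact Submodule.zero_mem _
    · rw [Submodule.span_le]
      rintro _ ⟨i, rfl⟩
      exact Submodule.subset_span ⟨(i : Fin n), rfl⟩
  rw [hspan, finrank_span_eq_card hli, Fintype.card_coe]
end
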